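/- For every integer n ≥ 1, the n-th Taylor coefficient of A at 0 equals the explicit alternating sum Aₙ = ∑_{j=1}^{n−1} (3^j·C(2j,j)/((2j−1)·16^{j+1}))·(−1/32)^{n−1−j} + (1/4)·(−1/32)^{n−1}. -/

import Mathlib

open Real

/-- The function `A(x) = 1 + 3x/(10 + √(4 - 3x))`. -/
noncomputable def Afun (x : ℝ) : ℝ := 1 + 3 * x / (10 + Real.sqrt (4 - 3 * x))

/-- The `n`-th Taylor coefficient of `A` at `0`. -/
noncomputable def Acoef (n : ℕ) : ℝ := iteratedDeriv n Afun 0 / (Nat.factorial n)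

open Topology Filter
open scoped ContDiff

namespace AcoefAux

/-- A bump function used to build a smooth truncation of the identity. -/
noncomputable def bmp : ContDiffBump (0:ℝ) := ⟨1/2, 1, by norm_num, by norm_num⟩

/-- A smooth truncation of the identity: equals `x` for `|x| ≤ 1/2`, bounded by `1`. -/
noncomputable def psi (x : ℝ) : ℝ := x * bmp x

lemma psi_smooth : ContDiff ℝ ∞ psi := contDiff_id.mul bmp.contDiff

lemma psi_eq {x : ℝ} (hx : |x| ≤ 1/2) : psi x = x := by
  have h1 : bmp x = 1 := bmp.one_of_mem_closedBall
    (by simpa [Metric.mem_closedBall, Real.dist_eq, bmp] using hx)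
  simp [psi, h1]

lemma abs_psi_le (x : ℝ) : |psi x| ≤ 1 := by
  rcases le_or_gt |x| 1 with h | h
  · have h0 : |bmp x| ≤ 1 := by
      rw [abs_of_nonneg bmp.nonneg]; exact bmp.le_one
    calc |psi x| = |x| * |bmp x| := abs_mul _ _
      _ ≤ 1 * 1 := mul_le_mul h h0 (abs_nonneg _) zero_le_one
      _ = 1 := one_mul 1
  · have h1 : bmp x = 0 := bmp.zero_of_le_dist (by simpa [Real.dist_eq, bmp] using h.le)
    simp [psi, h1]

noncomputable def S (x : ℝ) : ℝ := Real.sqrt (4 - 3 * psi x)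
noncomputable def G (x : ℝ) : ℝ := (32 + psi x)⁻¹
noncomputable def u (x : ℝ) : ℝ := (10 * x - x * S x) * G x

lemma inner_pos (x : ℝ) : 0 < 4 - 3 * psi x := by
  have := (abs_le.1 (abs_psi_le x)).2; linarith

lemma G_inner_pos (x : ℝ) : 0 < 32 + psi x := by
  have := (abs_le.1 (abs_psi_le x)).1; linarith

lemma S_smooth : ContDiff ℝ ∞ S := by
  rw [contDiff_iff_contDiffAt]
  intro x
  exact (Real.contDiffAt_sqrt (inner_pos x).ne').comp x
    ((contDiff_const.sub (contDiff_const.mul psi_smooth)).contDiffAt)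

lemma G_smooth : ContDiff ℝ ∞ G :=
  (contDiff_const.add psi_smooth).inv (fun x => (G_inner_pos x).ne')

lemma xS_smooth : ContDiff ℝ ∞ (fun x => x * S x) := contDiff_id.mul S_smooth

lemma lin_smooth : ContDiff ℝ ∞ (fun x : ℝ => 10 * x) := contDiff_const.mul contDiff_id

lemma num_smooth : ContDiff ℝ ∞ (fun x => 10 * x - x * S x) := lin_smooth.sub xS_smooth

lemma u_smooth : ContDiff ℝ ∞ u := num_smooth.mul G_smooth

lemma cdOn {f : ℝ → ℝ} (hf : ContDiff ℝ ∞ f) (n : ℕ) : ContDiffOn ℝ n f Set.univ :=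
  (hf.of_le (by exact_mod_cast le_top)).contDiffOn

lemma diffItd {f : ℝ → ℝ} (hf : ContDiff ℝ ∞ f) (m : ℕ) :
    Differentiable ℝ (iteratedDeriv m f) :=
  (hf.of_le (show ((m+1 : ℕ) : WithTop ℕ∞) ≤ _ by exact_mod_cast le_top)).differentiable_iteratedDeriv
    m (by exact_mod_cast lt_add_one m)

lemma diffOf {f : ℝ → ℝ} (hf : ContDiff ℝ ∞ f) : Differentiable ℝ f := by
  have := diffItd hf 0
  simpa [iteratedDeriv_zero] using this

lemma itd_add {f g : ℝ → ℝ} (hf : ContDiff ℝ ∞ f) (hg : ContDiff ℝ ∞ g) (n : ℕ) (x : ℝ) :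
    iteratedDeriv n (fun y => f y + g y) x = iteratedDeriv n f x + iteratedDeriv n g x := by
  rw [← iteratedDerivWithin_univ, ← iteratedDerivWithin_univ, ← iteratedDerivWithin_univ]
  exact iteratedDerivWithin_add (Set.mem_univ x) uniqueDiffOn_univ (cdOn hf n x (Set.mem_univ x)) (cdOn hg n x (Set.mem_univ x))

lemma itd_sub {f g : ℝ → ℝ} (hf : ContDiff ℝ ∞ f) (hg : ContDiff ℝ ∞ g) (n : ℕ) (x : ℝ) :
    iteratedDeriv n (fun y => f y - g y) x = iteratedDeriv n f x - iteratedDeriv n g x := by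
  rw [← iteratedDerivWithin_univ, ← iteratedDerivWithin_univ, ← iteratedDerivWithin_univ]
  exact iteratedDerivWithin_sub (Set.mem_univ x) uniqueDiffOn_univ (cdOn hf n x (Set.mem_univ x)) (cdOn hg n x (Set.mem_univ x))

lemma itd_const_add (c : ℝ) {f : ℝ → ℝ} {n : ℕ} (hn : 0 < n) (x : ℝ) :
    iteratedDeriv n (fun y => c + f y) x = iteratedDeriv n f x := by
  rw [← iteratedDerivWithin_univ, ← iteratedDerivWithin_univ]
  exact iteratedDerivWithin_const_add hn c

lemma itd_const_mul (c : ℝ) {f : ℝ → ℝ} (hf : ContDiff ℝ ∞ f) (n : ℕ) (x : ℝ) :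
    iteratedDeriv n (fun y => c * f y) x = c * iteratedDeriv n f x := by
  rw [← iteratedDerivWithin_univ, ← iteratedDerivWithin_univ]
  exact iteratedDerivWithin_const_mul (Set.mem_univ x) uniqueDiffOn_univ c (cdOn hf n x (Set.mem_univ x))

lemma itd_const (c : ℝ) (n : ℕ) : iteratedDeriv (n+1) (fun _ : ℝ => c) = fun _ => 0 := by
  induction n with
  | zero =>
    funext x
    rw [show (0+1) = 1 from rfl, iteratedDeriv_one]
    exact deriv_const x c
  | succ n ih =>
    rw [iteratedDeriv_succ, ih]
    funext x
    exact deriv_const x 0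

lemma itd_linear (c : ℝ) (n : ℕ) : iteratedDeriv (n+2) (fun x : ℝ => c * x) = fun _ => 0 := by
  have h : iteratedDeriv (n+1+1) (fun x : ℝ => c * x) = iteratedDeriv (n+1) (deriv (fun x : ℝ => c * x)) :=
    iteratedDeriv_succ'
  have h2 : deriv (fun x : ℝ => c * x) = fun _ => c := by
    funext x
    simpa using ((hasDerivAt_id x).const_mul c).deriv
  rw [show n+2 = n+1+1 from rfl, h, h2, itd_const]

lemma itd_id_mul {h : ℝ → ℝ} (hh : ContDiff ℝ ∞ h) (n : ℕ) :
    iteratedDeriv (n+1) (fun x => x * h x) =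
      fun x => x * iteratedDeriv (n+1) h x + ((n:ℝ)+1) * iteratedDeriv n h x := by
  induction n with
  | zero =>
    funext x
    rw [iteratedDeriv_one]
    have h1 : HasDerivAt (fun y => y * h y) (1 * h x + x * deriv h x) x :=
      (hasDerivAt_id x).mul ((diffOf hh x).hasDerivAt)
    rw [h1.deriv, iteratedDeriv_one, iteratedDeriv_zero]
    push_cast; ring
  | succ n ih =>
    funext x
    rw [iteratedDeriv_succ, ih]
    have d1 : DifferentiableAt ℝ (iteratedDeriv (n+1) h) x := (diffItd hh (n+1)).differentiableAt
    have d2 : DifferentiableAt ℝ (iteratedDeriv n h) x := (diffItd hh n).differentiableAt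
    have h1 : HasDerivAt (fun y => y * iteratedDeriv (n+1) h y)
        (1 * iteratedDeriv (n+1) h x + x * deriv (iteratedDeriv (n+1) h) x) x :=
      (hasDerivAt_id x).mul d1.hasDerivAt
    have h2 : HasDerivAt (fun y => ((n:ℝ)+1) * iteratedDeriv n h y)
        (((n:ℝ)+1) * deriv (iteratedDeriv n h) x) x :=
      (d2.hasDerivAt).const_mul _
    have h3 := (h1.add h2).deriv
    rw [show deriv (fun x => x * iteratedDeriv (n+1) h x + ((n:ℝ)+1) * iteratedDeriv n h x) x = _ from h3, ← iteratedDeriv_succ, ← iteratedDeriv_succ]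
    push_cast; ring

/-- The sequence of constants in the iterated derivative of `√(4-3x)`. -/
noncomputable def dcoef : ℕ → ℝ
  | 0 => 1
  | (n+1) => dcoef n * (-3) * ((1:ℝ)/2 - n)

lemma itd_S (n : ℕ) : ∀ x ∈ Metric.ball (0:ℝ) (1/2),
    iteratedDeriv n S x = dcoef n * (4 - 3*x) ^ ((1:ℝ)/2 - n) := by
  induction n with
  | zero =>
    intro x hx
    have hx' : |x| ≤ 1/2 := le_of_lt (by simpa [Real.dist_eq] using hx)
    rw [iteratedDeriv_zero, S, psi_eq hx', Real.sqrt_eq_rpow]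
    simp [dcoef]
  | succ n ih =>
    intro x hx
    have hx' : |x| ≤ 1/2 := le_of_lt (by simpa [Real.dist_eq] using hx)
    have hpos : (0:ℝ) < 4 - 3*x := by
      have := (abs_le.1 hx').2; linarith
    rw [iteratedDeriv_succ]
    have hev : iteratedDeriv n S =ᶠ[𝓝 x] fun y => dcoef n * (4 - 3*y) ^ ((1:ℝ)/2 - n) := by
      filter_upwards [Metric.isOpen_ball.mem_nhds hx] with y hy using ih y hy
    rw [hev.deriv_eq]
    have hd : HasDerivAt (fun y : ℝ => 4 - 3*y) (-(3*1)) x :=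
      ((hasDerivAt_id x).const_mul (3:ℝ)).const_sub 4
    have h2 := (hd.rpow_const (p := (1:ℝ)/2 - n) (Or.inl hpos.ne')).const_mul (dcoef n)
    rw [h2.deriv]
    have hexp : (1:ℝ)/2 - (n:ℝ) - 1 = (1:ℝ)/2 - ((n:ℕ)+1 : ℕ) := by push_cast; ring
    rw [show (dcoef (n+1)) = dcoef n * (-3) * ((1:ℝ)/2 - n) from rfl]
    rw [← hexp]
    ring

lemma S_deriv_zero (n : ℕ) : iteratedDeriv n S 0 = dcoef n * 2 / 4^n := by
  have h := itd_S n 0 (by simp [Metric.mem_ball])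
  rw [h, show (4:ℝ) - 3*0 = 4 by ring,
    show ((1:ℝ)/2 - n) = ((1:ℝ)/2) + (-(n:ℝ)) by ring,
    Real.rpow_add (by norm_num : (0:ℝ) < 4)]
  have h1 : (4:ℝ) ^ ((1:ℝ)/2) = 2 := by
    rw [← Real.sqrt_eq_rpow, show (4:ℝ) = 2^2 by norm_num, Real.sqrt_sq (by norm_num : (0:ℝ) ≤ 2)]
  have h2 : (4:ℝ) ^ (-(n:ℝ)) = (4^n)⁻¹ := by
    rw [Real.rpow_neg (by norm_num : (0:ℝ) ≤ 4), Real.rpow_natCast]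
  rw [h1, h2]
  ring

/-- The summand coefficients in the explicit formula. -/
noncomputable def ccoef (j : ℕ) : ℝ :=
  3 ^ j * (Nat.choose (2 * j) j : ℝ) / ((2 * (j : ℝ) - 1) * 16 ^ (j + 1))

lemma S_coef : ∀ j : ℕ, 1 ≤ j → iteratedDeriv j S 0 = -32 * (Nat.factorial j) * ccoef j := by
  intro j hj
  induction j, hj using Nat.le_induction with
  | base =>
    rw [S_deriv_zero]
    norm_num [dcoef, ccoef]
  | succ n hn ih =>
    rw [S_deriv_zero] at ih ⊢
    have hfac : (Nat.factorial n : ℝ) ≠ 0 := by positivity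
    have h4 : ((4:ℝ))^n ≠ 0 := by positivity
    have h16 : ((16:ℝ))^(n+1) ≠ 0 := by positivity
    have h2n : (2 * (n:ℝ) - 1) ≠ 0 := by
      have : (1:ℝ) ≤ n := by exact_mod_cast hn
      nlinarith
    have h2n1 : (2 * ((n:ℝ)+1) - 1) ≠ 0 := by
      have : (1:ℝ) ≤ n := by exact_mod_cast hn
      nlinarith
    have hbinom : ((n:ℝ)+1) * ((Nat.choose (2*(n+1)) (n+1) : ℕ) : ℝ)
        = 2 * (2*(n:ℝ)+1) * ((Nat.choose (2*n) n : ℕ) : ℝ) := by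
      have := Nat.succ_mul_centralBinom_succ n
      rw [Nat.centralBinom, Nat.centralBinom] at this
      exact_mod_cast this
    rw [show dcoef (n+1) = dcoef n * (-3) * ((1:ℝ)/2 - n) from rfl]
    unfold ccoef at ih ⊢
    rw [Nat.factorial_succ]
    have hd : dcoef n = -32 * (Nat.factorial n) *
        (3 ^ n * (Nat.choose (2 * n) n : ℝ) / ((2 * (n : ℝ) - 1) * 16 ^ (n + 1))) * 4^n / 2 := by
      field_simp at ih ⊢
      linear_combination ih
    rw [hd]
    push_cast
    field_simp
    push_cast at hbinom
    linear_combination (2 * (2*(n:ℝ)-1) * 16^(n+1) * 4^(n+1) * 3^(n+1)) * hbinom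

lemma afun_eventually : Afun =ᶠ[𝓝 0] fun x => 1 + u x := by
  filter_upwards [Metric.ball_mem_nhds (0:ℝ) (by norm_num : (0:ℝ) < 1/2)] with x hx
  have hx' : |x| ≤ 1/2 := le_of_lt (by simpa [Real.dist_eq] using hx)
  have hb := abs_le.1 hx'
  have hψ : psi x = x := psi_eq hx'
  have h4 : (0:ℝ) ≤ 4 - 3*x := by linarith [hb.2]
  have hs : Real.sqrt (4-3*x) ^ 2 = 4 - 3*x := Real.sq_sqrt h4
  have hs0 : (0:ℝ) ≤ Real.sqrt (4-3*x) := Real.sqrt_nonneg _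
  have h10 : 10 + Real.sqrt (4-3*x) ≠ 0 := by positivity
  have h32 : (32:ℝ) + x ≠ 0 := by nlinarith [hb.1]
  unfold Afun u S G
  rw [hψ]
  field_simp
  nlinarith [hs, hs0]


lemma key_eventually : (fun x => (32 + x) * u x) =ᶠ[𝓝 0] fun x => 10*x - x * S x := by
  filter_upwards [Metric.ball_mem_nhds (0:ℝ) (by norm_num : (0:ℝ) < 1/2)] with x hx
  have hx' : |x| ≤ 1/2 := le_of_lt (by simpa [Real.dist_eq] using hx)
  have hb := abs_le.1 hx'
  have hψ : psi x = x := psi_eq hx'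
  have h32 : (32:ℝ) + x ≠ 0 := by nlinarith [hb.1]
  unfold u G
  rw [hψ]
  field_simp

lemma recurrence (m : ℕ) :
    32 * iteratedDeriv (m+2) u 0 + ((m:ℝ)+2) * iteratedDeriv (m+1) u 0
      = -((m:ℝ)+2) * iteratedDeriv (m+1) S 0 := by
  have hL := key_eventually.iteratedDeriv_eq (m+2)
  have e1 : (fun x => (32 + x) * u x) = fun x => 32 * u x + x * u x := by
    funext x; ring
  have hf1 : ContDiff ℝ ∞ (fun x : ℝ => 32 * u x) := contDiff_const.mul u_smooth
  have hf2 : ContDiff ℝ ∞ (fun x : ℝ => x * u x) := contDiff_id.mul u_smooth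
  have eL : iteratedDeriv (m+2) (fun x => (32+x) * u x) 0
      = 32 * iteratedDeriv (m+2) u 0 + ((m:ℝ)+2) * iteratedDeriv (m+1) u 0 := by
    rw [e1, itd_add hf1 hf2 (m+2) 0, itd_const_mul 32 u_smooth]
    rw [show m+2 = m+1+1 from rfl, itd_id_mul u_smooth (m+1)]
    push_cast
    ring
  have eR : iteratedDeriv (m+2) (fun x => 10*x - x*S x) 0
      = -((m:ℝ)+2) * iteratedDeriv (m+1) S 0 := by
    rw [itd_sub lin_smooth xS_smooth (m+2) 0, itd_linear 10 m]
    rw [show m+2 = m+1+1 from rfl, itd_id_mul S_smooth (m+1)]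
    push_cast
    ring
  rw [← eL, ← eR, hL]

lemma afun_itd (n : ℕ) (hn : 1 ≤ n) : iteratedDeriv n Afun 0 = iteratedDeriv n u 0 := by
  rw [afun_eventually.iteratedDeriv_eq n]
  exact itd_const_add 1 hn 0

lemma deriv_u_zero : iteratedDeriv 1 u 0 = 1/4 := by
  rw [iteratedDeriv_one]
  have hS0 : S 0 = 2 := by
    rw [S, psi_eq (by norm_num : |(0:ℝ)| ≤ 1/2)]
    rw [show (4:ℝ) - 3*0 = 2^2 by norm_num, Real.sqrt_sq (by norm_num : (0:ℝ) ≤ 2)]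
  have hG0 : G 0 = 1/32 := by
    rw [G, psi_eq (by norm_num : |(0:ℝ)| ≤ 1/2)]
    norm_num
  have hS' : HasDerivAt S (deriv S 0) 0 := (diffOf S_smooth 0).hasDerivAt
  have hG' : HasDerivAt G (deriv G 0) 0 := (diffOf G_smooth 0).hasDerivAt
  have hnum : HasDerivAt (fun x => 10*x - x*S x)
      (10 * 1 - (1 * S 0 + 0 * deriv S 0)) 0 :=
    ((hasDerivAt_id 0).const_mul 10).sub ((hasDerivAt_id 0).mul hS')
  have hu : HasDerivAt u
      ((10 * 1 - (1 * S 0 + 0 * deriv S 0)) * G 0 + (10*0 - 0*S 0) * deriv G 0) 0 :=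
    hnum.mul hG'
  rw [hu.deriv, hS0, hG0]
  norm_num

lemma acoef_one : Acoef 1 = 1/4 := by
  unfold Acoef
  rw [afun_itd 1 le_rfl, deriv_u_zero]
  norm_num

lemma acoef_rec (m : ℕ) : Acoef (m+2) = (-1/32) * Acoef (m+1) + ccoef (m+1) := by
  have hrec := recurrence m
  have hS := S_coef (m+1) (by omega)
  rw [hS] at hrec
  unfold Acoef
  rw [afun_itd (m+2) (by omega), afun_itd (m+1) (by omega)]
  have hfac1 : (Nat.factorial (m+1) : ℝ) ≠ 0 := by positivity
  have hfac2 : (Nat.factorial (m+2) : ℝ) ≠ 0 := by positivity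
  have hfs : (Nat.factorial (m+2) : ℝ) = ((m:ℝ)+2) * (Nat.factorial (m+1) : ℝ) := by
    rw [show m+2 = (m+1)+1 from rfl, Nat.factorial_succ]
    push_cast; ring
  rw [hfs]
  field_simp
  linear_combination hrec

end AcoefAux

theorem Acoef_explicit_formula (n : ℕ) (hn : 1 ≤ n) :
    Acoef n =
      (∑ j ∈ Finset.Icc 1 (n - 1),
          (3 ^ j * (Nat.choose (2 * j) j : ℝ) / ((2 * (j : ℝ) - 1) * 16 ^ (j + 1))) *
            (-1 / 32) ^ (n - 1 - j)) +
        (1 / 4) * (-1 / 32 : ℝ) ^ (n - 1) := by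
  induction n, hn using Nat.le_induction with
  | base =>
    simp [AcoefAux.acoef_one]
  | succ n hn ih =>
    obtain ⟨k, rfl⟩ : ∃ k, n = k + 1 := ⟨n - 1, by omega⟩
    have hrec := AcoefAux.acoef_rec k
    rw [show k+1+1 = k+2 from rfl, hrec, ih]
    simp only [show k+1-1 = k from rfl, show k+2-1 = k+1 from rfl]
    rw [Finset.sum_Icc_succ_top (by omega : 1 ≤ k+1)]
    rw [show AcoefAux.ccoef (k+1)
      = 3 ^ (k+1) * (Nat.choose (2 * (k+1)) (k+1) : ℝ) / ((2 * ((k:ℝ)+1) - 1) * 16 ^ (k+1+1)) from by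
        simp [AcoefAux.ccoef]]
    rw [mul_add, Finset.mul_sum]
    have hsum : ∀ j ∈ Finset.Icc 1 k,
        (-1/32 : ℝ) * ((3 ^ j * (Nat.choose (2 * j) j : ℝ) / ((2 * (j : ℝ) - 1) * 16 ^ (j + 1))) *
            (-1 / 32) ^ (k - j))
        = (3 ^ j * (Nat.choose (2 * j) j : ℝ) / ((2 * (j : ℝ) - 1) * 16 ^ (j + 1))) *
            (-1 / 32) ^ (k + 1 - j) := by
      intro j hj
      have hjk : j ≤ k := (Finset.mem_Icc.1 hj).2
      rw [show k + 1 - j = (k - j) + 1 by omega, pow_succ]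
      ring
    rw [Finset.sum_congr rfl hsum]
    have hlast : (k:ℝ)+1 = ((k+1 : ℕ) : ℝ) := by push_cast; ring
    rw [show (k+1) - (k+1) = 0 by omega]
    push_cast
    ring
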